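/- Let G' be a snark with a pentagon P' with vertices u_k and edges (u_k,u_{k+1}), k ∈ Z₅, let G₀' = G' − {u_k : k ∈ Z₅}, and for each k ∈ Z₅ let t_k be the vertex of G₀' such that (t_k,u_k) is an edge of G'. Let G* be a snark disjoint from G' with a pentagon P* with vertices v_k and edges (v_k,v_{k+1}), k ∈ Z₅, let G₀* = G* − {v_k : k ∈ Z₅}, and for each k ∈ Z₅ let w_k be the vertex of G₀* such that (v_k,w_k) is an edge of G*. Let G be the cubic graph consisting of G₀', G₀*, and the five new edges (t_k, w_{2k}), k ∈ Z₅ (indices mod 5). Then G admits no edge-3-coloring. -/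

import Mathlib

namespace SnarkPaper

open SimpleGraph

/-- The color group `Z₂ × Z₂`. -/
abbrev Color : Type := ZMod 2 × ZMod 2

/-- The color `a = (0,1)`. -/
def colA : Color := (0, 1)
/-- The color `b = (1,0)`. -/
def colB : Color := (1, 0)
/-- The color `c = (1,1)`. -/
def colC : Color := (1, 1)

/-- The set of the three nonzero elements of `Z₂ × Z₂` used as colors. -/
def colorSet : Set Color := {colA, colB, colC}

variable {V V₁ V₂ : Type*}

/-- Two edges are adjacent if they are distinct and share an endpoint. -/
def EdgesAdj (e f : Sym2 V) : Prop := e ≠ f ∧ ∃ x, x ∈ e ∧ x ∈ f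

/-- The set of edge-3-colorings of `G`: functions assigning to each edge of `G` one of the
three nonzero elements of `Z₂ × Z₂` so that adjacent edges get distinct values (and pinned
to `0` off the edge set, so that counting colorings is faithful). -/
def EC (G : SimpleGraph V) : Set (Sym2 V → Color) :=
  {γ | (∀ e ∈ G.edgeSet, γ e ∈ colorSet) ∧ (∀ e ∉ G.edgeSet, γ e = 0) ∧
       ∀ e ∈ G.edgeSet, ∀ f ∈ G.edgeSet, EdgesAdj e f → γ e ≠ γ f}

/-- The set of 3-edge-decompositions of `G`: partitions of the edge set of `G` into three
classes such that no two adjacent edges lie in the same class. -/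
def ED (G : SimpleGraph V) : Set (Set (Set (Sym2 V))) :=
  {D | D.ncard = 3 ∧ (∀ s ∈ D, s ⊆ G.edgeSet) ∧
       (∀ e ∈ G.edgeSet, ∃! s, s ∈ D ∧ e ∈ s) ∧
       (∀ s ∈ D, ∀ e ∈ s, ∀ f ∈ s, ¬ EdgesAdj e f)}

/-- Two edges lie in the same class of the decomposition `D`. -/
def SameClass (D : Set (Set (Sym2 V))) (e f : Sym2 V) : Prop :=
  ∃ s ∈ D, e ∈ s ∧ f ∈ s

/-- A graph is cubic if every vertex has degree 3. -/
def IsCubic (G : SimpleGraph V) : Prop := ∀ v, (G.neighborSet v).ncard = 3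

/-- A graph is quasi-cubic if every vertex has degree 1 or 3. -/
def IsQuasiCubic (G : SimpleGraph V) : Prop :=
  ∀ v, (G.neighborSet v).ncard = 1 ∨ (G.neighborSet v).ncard = 3

/-- `G` is cyclically `n`-edge-connected: for any two vertex-disjoint cycles `C₁`, `C₂` and
any set `S` of at most `n-1` edges of `G` containing no edge of `C₁` or `C₂`, deleting `S`
leaves a path from a vertex of `C₁` to a vertex of `C₂`. -/
def CyclicallyEdgeConnected (G : SimpleGraph V) (n : ℕ) : Prop :=
  ∀ ⦃x y : V⦄ (C₁ : G.Walk x x) (C₂ : G.Walk y y), C₁.IsCycle → C₂.IsCycle →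
    (∀ w, w ∈ C₁.support → w ∉ C₂.support) →
    ∀ S : Set (Sym2 V), S ⊆ G.edgeSet → S.ncard ≤ n - 1 →
      (∀ e ∈ S, e ∉ C₁.edges ∧ e ∉ C₂.edges) →
      ∃ x' ∈ C₁.support, ∃ y' ∈ C₂.support, (G.deleteEdges S).Reachable x' y'

/-- A snark: a connected cubic graph with girth at least 5 which is cyclically
4-edge-connected and admits no edge-3-coloring. -/
def IsSnark (G : SimpleGraph V) : Prop :=
  G.Connected ∧ IsCubic G ∧ 5 ≤ G.girth ∧ CyclicallyEdgeConnected G 4 ∧ EC G = ∅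

/-- The edges `d₁` and `d₂` lie in a common (two-colored) Kempe cycle for the coloring `γ`. -/
def InCommonKempeCycle (G : SimpleGraph V) (γ : Sym2 V → Color) (d₁ d₂ : Sym2 V) : Prop :=
  ∃ x ∈ colorSet, ∃ y ∈ colorSet, x ≠ y ∧
    ∃ (a : V) (C : G.Walk a a), C.IsCycle ∧
      (∀ e ∈ C.edges, γ e = x ∨ γ e = y) ∧ d₁ ∈ C.edges ∧ d₂ ∈ C.edges

/-- Two edges of `G` are orthogonal if no edge-3-coloring of `G` puts them in a common
Kempe cycle. -/
def OrthogonalEdges (G : SimpleGraph V) (d₁ d₂ : Sym2 V) : Prop :=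
  d₁ ∈ G.edgeSet ∧ d₂ ∈ G.edgeSet ∧ ∀ γ ∈ EC G, ¬ InCommonKempeCycle G γ d₁ d₂

/-- The graph `G_e` for the edge `e = s(u,v)`: delete `u`, `v` and the five edges incident
to them (leaving `u` and `v` as isolated vertices), and add the new edge `d₁` joining the two
other neighbors of `u` and the new edge `d₂` joining the two other neighbors of `v`. -/
def edgeDeleted (G : SimpleGraph V) (u v : V) : SimpleGraph V :=
  SimpleGraph.fromEdgeSet
    ({e ∈ G.edgeSet | u ∉ e ∧ v ∉ e} ∪
     {e | ∃ x y, e = s(x, y) ∧ x ≠ y ∧ G.Adj u x ∧ G.Adj u y ∧ x ≠ v ∧ y ≠ v} ∪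
     {e | ∃ x y, e = s(x, y) ∧ x ≠ y ∧ G.Adj v x ∧ G.Adj v y ∧ x ≠ u ∧ y ≠ u})


/-- The graph `G` of Context 4.7: the union of `G0' = G' - {u_k}`, `G0* = G* - {v_k}`
(on the disjoint sum of the vertex types) together with the five connecting edges
`(t_k, w_{2k})`, `k in Z5`. -/
def pentagonJoin (G1 : SimpleGraph V₁) (G2 : SimpleGraph V₂)
    (u t : ZMod 5 → V₁) (v w : ZMod 5 → V₂) : SimpleGraph (V₁ ⊕ V₂) :=
  SimpleGraph.fromEdgeSet
    ((Sym2.map (Sum.inl : V₁ → V₁ ⊕ V₂)) '' {e ∈ G1.edgeSet | ∀ k : ZMod 5, u k ∉ e} ∪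
     (Sym2.map (Sum.inr : V₂ → V₁ ⊕ V₂)) '' {e ∈ G2.edgeSet | ∀ k : ZMod 5, v k ∉ e} ∪
     {e | ∃ k : ZMod 5, e = s(Sum.inl (t k), Sum.inr (w (2 * k)))})

-- ============ auxiliary development ============

lemma mem_colorSet_iff {x : Color} : x ∈ colorSet ↔ x = colA ∨ x = colB ∨ x = colC := by
  simp [colorSet, Set.mem_insert_iff, Set.mem_singleton_iff]

lemma color_add_self : ∀ z : Color, z + z = 0 := by decide

lemma sum3 {x y z : Color} (hx : x ∈ colorSet) (hy : y ∈ colorSet) (hz : z ∈ colorSet)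
    (hxy : x ≠ y) (hxz : x ≠ z) (hyz : y ≠ z) : x + y + z = 0 := by
  rw [mem_colorSet_iff] at hx hy hz
  rcases hx with rfl | rfl | rfl <;> rcases hy with rfl | rfl | rfl <;>
    rcases hz with rfl | rfl | rfl <;>
    first
      | decide
      | (exact absurd rfl hxy)
      | (exact absurd rfl hxz)
      | (exact absurd rfl hyz)

/-- cycles of length 3 -/
lemma cyc3 {V : Type*} (G : SimpleGraph V) {a b c : V} (hab : G.Adj a b) (hbc : G.Adj b c)
    (hca : G.Adj c a) (hac : a ≠ c) : ∃ (w : G.Walk a a), w.IsCycle ∧ w.length = 3 := by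
  refine ⟨Walk.cons hab (Walk.cons hbc (Walk.cons hca Walk.nil)), ?_, rfl⟩
  rw [Walk.isCycle_def]
  simp [Walk.isTrail_def, hab.ne, hab.ne', hbc.ne, hca.ne, Sym2.eq, Sym2.rel_iff', hac, hac.symm]

/-- cycles of length 4 -/
lemma cyc4 {V : Type*} (G : SimpleGraph V) {a b c d : V} (hab : G.Adj a b) (hbc : G.Adj b c)
    (hcd : G.Adj c d) (hda : G.Adj d a) (hac : a ≠ c) (hbd : b ≠ d) :
    ∃ (w : G.Walk a a), w.IsCycle ∧ w.length = 4 := by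
  refine ⟨Walk.cons hab (Walk.cons hbc (Walk.cons hcd (Walk.cons hda Walk.nil))), ?_, rfl⟩
  rw [Walk.isCycle_def]
  simp [Walk.isTrail_def, hab.ne, hab.ne', hbc.ne, hcd.ne, hda.ne, Sym2.eq, Sym2.rel_iff', hac,
    hac.symm, hbd, hbd.symm]

lemma girth_le_of_cycle {V : Type*} {G : SimpleGraph V} {a : V} {w : G.Walk a a}
    (hw : w.IsCycle) {n : ℕ} (hn : w.length ≤ n) : G.girth ≤ n := by
  have h1 : G.egirth ≤ w.length := iInf_le_of_le a (iInf_le_of_le w (iInf_le _ hw))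
  have h2 : G.egirth ≤ (n : ℕ∞) := h1.trans (by exact_mod_cast hn)
  have h3 := ENat.toNat_le_toNat h2 (by simp)
  simpa [SimpleGraph.girth] using h3

lemma zmod5_two_ne : (2 : ZMod 5) ≠ 0 := by decide

lemma zmod5_cases : ∀ d : ZMod 5, d ≠ 0 → d = 1 ∨ d = 2 ∨ d = 3 ∨ d = 4 := by decide

lemma zmod5_sub_ne_add (m : ZMod 5) : m - 1 ≠ m + 1 := by
  intro h
  have h2 : (-1 : ZMod 5) = 1 := by
    have := congrArg (fun z => z - m) h
    simpa [sub_sub_cancel_left] using this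
  exact absurd h2 (by decide)

lemma zmod5_ne_add_two (k : ZMod 5) : k ≠ k + 2 :=
  fun hh => zmod5_two_ne (left_eq_add.mp hh)

lemma sym2_ne_left {V : Type*} {a b c : V} (hbc : b ≠ c) (hca : c ≠ a) : s(a, b) ≠ s(a, c) := by
  intro h
  rcases Sym2.eq_iff.mp h with ⟨_, h2⟩ | ⟨h1, _⟩
  · exact hbc h2
  · exact hca h1.symm

lemma edge_rep {V : Type*} {G : SimpleGraph V} {z : V} :
    ∀ {e : Sym2 V}, e ∈ G.edgeSet → z ∈ e → ∃ x, e = s(z, x) ∧ G.Adj z x := by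
  intro e
  induction e using Sym2.ind with
  | _ a b =>
    intro he hz
    rw [SimpleGraph.mem_edgeSet] at he
    rcases Sym2.mem_iff.mp hz with rfl | rfl
    · exact ⟨b, rfl, he⟩
    · exact ⟨a, Sym2.eq_swap, he.symm⟩

section SumHelpers

variable {α M : Type*} [Fintype α] [AddCommMonoid M]

lemma sum_ite_zero' (g : α → M) (cond : α → Prop) [DecidablePred cond]
    (hc : ∀ y, ¬ cond y) : (∑ y : α, if cond y then g y else 0) = 0 :=
  Finset.sum_eq_zero fun y _ => if_neg (hc y)

lemma sum_ite_one' [DecidableEq α] (g : α → M) (cond : α → Prop) [DecidablePred cond]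
    {y1 : α} (hc : ∀ y, cond y ↔ y = y1) :
    (∑ y : α, if cond y then g y else 0) = g y1 := by
  have h : ∀ y : α, (if cond y then g y else 0) = if y = y1 then g y else 0 :=
    fun y => if_congr (hc y) rfl rfl
  rw [Finset.sum_congr rfl (fun y _ => h y), Finset.sum_ite_eq' Finset.univ y1 g]
  simp

lemma sum_ite_two' [DecidableEq α] (g : α → M) (cond : α → Prop) [DecidablePred cond]
    {y1 y2 : α} (h12 : y1 ≠ y2) (hc : ∀ y, cond y ↔ y = y1 ∨ y = y2) :
    (∑ y : α, if cond y then g y else 0) = g y1 + g y2 := by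
  have h : ∀ y : α, (if cond y then g y else 0) =
      if y ∈ ({y1, y2} : Finset α) then g y else 0 :=
    fun y => if_congr (by simp [hc y]) rfl rfl
  rw [Finset.sum_congr rfl (fun y _ => h y), Finset.sum_ite_mem, Finset.univ_inter,
    Finset.sum_pair h12]

lemma sum_ite_three' [DecidableEq α] (g : α → M) (cond : α → Prop) [DecidablePred cond]
    {y1 y2 y3 : α} (h12 : y1 ≠ y2) (h13 : y1 ≠ y3) (h23 : y2 ≠ y3)
    (hc : ∀ y, cond y ↔ y = y1 ∨ y = y2 ∨ y = y3) :
    (∑ y : α, if cond y then g y else 0) = g y1 + (g y2 + g y3) := by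
  have h : ∀ y : α, (if cond y then g y else 0) =
      if y ∈ ({y1, y2, y3} : Finset α) then g y else 0 :=
    fun y => if_congr (by simp [hc y]) rfl rfl
  rw [Finset.sum_congr rfl (fun y _ => h y), Finset.sum_ite_mem, Finset.univ_inter]
  rw [show ({y1, y2, y3} : Finset α) = insert y1 {y2, y3} from rfl,
    Finset.sum_insert (by simp [h12, h13]), Finset.sum_pair h23]

end SumHelpers

section PentagonSide

variable {V₁ : Type*} [Fintype V₁] {G1 : SimpleGraph V₁} {u t : ZMod 5 → V₁}

lemma tinj (hg : 5 ≤ G1.girth) (huinj : Function.Injective u)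
    (hP1 : ∀ k, G1.Adj (u k) (u (k + 1))) (ht : ∀ k, G1.Adj (t k) (u k))
    (htu : ∀ k l, t k ≠ u l) : Function.Injective t := by
  have aux1 : ∀ k, t k ≠ t (k + 1) := by
    intro k h
    have hca : G1.Adj (u (k + 1)) (t k) := by
      have := ht (k + 1); rw [← h] at this; exact this.symm
    obtain ⟨W, hW, hlen⟩ := cyc3 G1 (ht k) (hP1 k) hca (htu k (k + 1))
    have := girth_le_of_cycle hW hlen.le
    omega
  have aux2 : ∀ k, t k ≠ t (k + 2) := by
    intro k h
    have hcd : G1.Adj (u (k + 1)) (u (k + 2)) := by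
      have := hP1 (k + 1)
      have e : k + 1 + 1 = k + 2 := by ring
      rwa [e] at this
    have hda : G1.Adj (u (k + 2)) (t k) := by
      have := ht (k + 2); rw [← h] at this; exact this.symm
    have hbd : u k ≠ u (k + 2) := fun hh => zmod5_ne_add_two k (huinj hh)
    obtain ⟨W, hW, hlen⟩ := cyc4 G1 (ht k) (hP1 k) hcd hda (htu k (k + 1)) hbd
    have := girth_le_of_cycle hW hlen.le
    omega
  intro k l h
  by_contra hkl
  have hd0 : l - k ≠ 0 := fun h0 => hkl (sub_eq_zero.mp h0).symm
  rcases zmod5_cases (l - k) hd0 with h1 | h1 | h1 | h1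
  · have hl : l = k + 1 := by rw [← sub_add_cancel l k, h1, add_comm]
    rw [hl] at h; exact aux1 k h
  · have hl : l = k + 2 := by rw [← sub_add_cancel l k, h1, add_comm]
    rw [hl] at h; exact aux2 k h
  · have hl : k = l + 2 := by
      have h2 : k - l = 2 := by
        have h3 : k - l = -(l - k) := by ring
        rw [h3, h1]; decide
      rw [← sub_add_cancel k l, h2, add_comm]
    rw [hl] at h; exact aux2 l h.symm
  · have hl : k = l + 1 := by
      have h2 : k - l = 1 := by
        have h3 : k - l = -(l - k) := by ring
        rw [h3, h1]; decide
      rw [← sub_add_cancel k l, h2, add_comm]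
    rw [hl] at h; exact aux1 l h.symm

lemma nbhdU (hcub : IsCubic G1) (huinj : Function.Injective u)
    (hP1 : ∀ k, G1.Adj (u k) (u (k + 1))) (ht : ∀ k, G1.Adj (t k) (u k))
    (htu : ∀ k l, t k ≠ u l) (m : ZMod 5) :
    G1.neighborSet (u m) = {u (m - 1), u (m + 1), t m} := by
  have hsub : ({u (m - 1), u (m + 1), t m} : Set V₁) ⊆ G1.neighborSet (u m) := by
    intro x hx
    simp only [Set.mem_insert_iff, Set.mem_singleton_iff] at hx
    rcases hx with rfl | rfl | rfl
    · have := hP1 (m - 1); rw [sub_add_cancel] at this; exact this.symm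
    · exact hP1 m
    · exact (ht m).symm
  have hcard : ({u (m - 1), u (m + 1), t m} : Set V₁).ncard = 3 := by
    refine Set.ncard_eq_three.mpr ⟨u (m - 1), u (m + 1), t m, ?_, ?_, ?_, rfl⟩
    · exact fun hh => zmod5_sub_ne_add m (huinj hh)
    · exact fun hh => (htu m (m - 1)) hh.symm
    · exact fun hh => (htu m (m + 1)) hh.symm
  exact (Set.eq_of_subset_of_ncard_le hsub (by rw [hcub (u m), hcard]) (Set.toFinite _)).symm

lemma adjU (hcub : IsCubic G1) (huinj : Function.Injective u)
    (hP1 : ∀ k, G1.Adj (u k) (u (k + 1))) (ht : ∀ k, G1.Adj (t k) (u k))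
    (htu : ∀ k l, t k ≠ u l) {m : ZMod 5} {x : V₁} (h : G1.Adj (u m) x) :
    x = u (m - 1) ∨ x = u (m + 1) ∨ x = t m := by
  have hx : x ∈ G1.neighborSet (u m) := h
  rw [nbhdU hcub huinj hP1 ht htu m] at hx
  simpa [Set.mem_insert_iff] using hx

lemma adj_t_u (hcub : IsCubic G1) (huinj : Function.Injective u)
    (htinj : Function.Injective t)
    (hP1 : ∀ k, G1.Adj (u k) (u (k + 1))) (ht : ∀ k, G1.Adj (t k) (u k))
    (htu : ∀ k l, t k ≠ u l) {k l : ZMod 5} (h : G1.Adj (t k) (u l)) : k = l := by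
  rcases adjU hcub huinj hP1 ht htu h.symm with h' | h' | h'
  · exact absurd h' (htu k (l - 1))
  · exact absurd h' (htu k (l + 1))
  · exact htinj h'

lemma uniq_t (huinj : Function.Injective u) (htinj : Function.Injective t)
    (htu : ∀ k l, t k ≠ u l) {k l : ZMod 5} (h : s(t k, u k) = s(t l, u l)) : k = l := by
  rcases Sym2.eq_iff.mp h with ⟨h1, _⟩ | ⟨h1, _⟩
  · exact htinj h1
  · exact absurd h1 (htu k l)

lemma uniq_p (huinj : Function.Injective u) {k l : ZMod 5}
    (h : s(u k, u (k + 1)) = s(u l, u (l + 1))) : k = l := by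
  rcases Sym2.eq_iff.mp h with ⟨h1, _⟩ | ⟨h1, h2⟩
  · exact huinj h1
  · exfalso
    have e1 : k = l + 1 := huinj h1
    have e2 : k + 1 = l := huinj h2
    have h22 : (2 : ZMod 5) = 0 := by linear_combination e2 - e1
    exact zmod5_two_ne h22

lemma pe_ne_te (htu : ∀ k l, t k ≠ u l) (k l : ZMod 5) :
    s(u k, u (k + 1)) ≠ s(t l, u l) := by
  intro h
  rcases Sym2.eq_iff.mp h with ⟨h1, _⟩ | ⟨_, h2⟩
  · exact (htu l k) h1.symm
  · exact (htu l (k + 1)) h2.symm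

end PentagonSide

/-- The colors on the five dangling edges can be extended across the pentagon. -/
def Extendable (c : ZMod 5 → Color) : Prop :=
  ∃ p : ZMod 5 → Color, ∀ k, p k ∈ colorSet ∧ p (k - 1) ≠ p k ∧ c k ≠ p k ∧ c k ≠ p (k - 1)

theorem buildEC {V₁ : Type*} [Fintype V₁] {G1 : SimpleGraph V₁} {u t : ZMod 5 → V₁}
    (hcub : IsCubic G1) (huinj : Function.Injective u) (htinj : Function.Injective t)
    (hP1 : ∀ k, G1.Adj (u k) (u (k + 1))) (ht : ∀ k, G1.Adj (t k) (u k))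
    (htu : ∀ k l, t k ≠ u l)
    (δ : Sym2 V₁ → Color) (c : ZMod 5 → Color)
    (ha : ∀ e ∈ G1.edgeSet, (∀ k, u k ∉ e) → δ e ∈ colorSet)
    (he0 : ∀ e ∉ G1.edgeSet, (∀ k, u k ∉ e) → δ e = 0)
    (hb : ∀ e ∈ G1.edgeSet, ∀ f ∈ G1.edgeSet, (∀ k, u k ∉ e) → (∀ k, u k ∉ f) →
      EdgesAdj e f → δ e ≠ δ f)
    (hc : ∀ k, c k ∈ colorSet)
    (hd : ∀ e ∈ G1.edgeSet, (∀ k, u k ∉ e) → ∀ k, t k ∈ e → δ e ≠ c k)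
    (hext : Extendable c) : (EC G1).Nonempty := by
  classical
  obtain ⟨p, hp⟩ := hext
  set γ₁ : Sym2 V₁ → Color := fun e =>
    if h : ∃ k, e = s(t k, u k) then c h.choose
    else if h2 : ∃ k, e = s(u k, u (k + 1)) then p h2.choose
    else if (∀ k, u k ∉ e) then δ e else 0 with hγ₁def
  have ev_t : ∀ k, γ₁ s(t k, u k) = c k := by
    intro k
    have hex : ∃ l, s(t k, u k) = s(t l, u l) := ⟨k, rfl⟩
    simp only [hγ₁def, dif_pos hex]
    exact (congrArg c (uniq_t huinj htinj htu hex.choose_spec)).symm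
  have ev_p : ∀ k, γ₁ s(u k, u (k + 1)) = p k := by
    intro k
    have hne : ¬∃ l, s(u k, u (k + 1)) = s(t l, u l) := by
      rintro ⟨l, hl⟩; exact pe_ne_te htu k l hl
    have hex : ∃ l, s(u k, u (k + 1)) = s(u l, u (l + 1)) := ⟨k, rfl⟩
    simp only [hγ₁def, dif_neg hne, dif_pos hex]
    exact (congrArg p (uniq_p huinj hex.choose_spec)).symm
  have ev_int : ∀ e, (∀ k, u k ∉ e) → γ₁ e = δ e := by
    intro e he
    have h1 : ¬∃ l, e = s(t l, u l) := by
      rintro ⟨l, rfl⟩; exact he l (Sym2.mem_iff.mpr (Or.inr rfl))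
    have h2 : ¬∃ l, e = s(u l, u (l + 1)) := by
      rintro ⟨l, rfl⟩; exact he l (Sym2.mem_iff.mpr (Or.inl rfl))
    simp only [hγ₁def, dif_neg h1, dif_neg h2, if_pos he]
  have tE_mem : ∀ k, s(t k, u k) ∈ G1.edgeSet := fun k => G1.mem_edgeSet.mpr (ht k)
  have pE_mem : ∀ k, s(u k, u (k + 1)) ∈ G1.edgeSet := fun k => G1.mem_edgeSet.mpr (hP1 k)
  have classify : ∀ e ∈ G1.edgeSet,
      (∃ k, e = s(t k, u k)) ∨ (∃ k, e = s(u k, u (k + 1))) ∨ (∀ k, u k ∉ e) := by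
    intro e he
    by_cases hall : ∀ k, u k ∉ e
    · exact Or.inr (Or.inr hall)
    · push_neg at hall
      obtain ⟨m, hm⟩ := hall
      obtain ⟨x, rfl, hadj⟩ := edge_rep he hm
      rcases adjU hcub huinj hP1 ht htu hadj with rfl | rfl | rfl
      · refine Or.inr (Or.inl ⟨m - 1, ?_⟩)
        rw [sub_add_cancel]; exact Sym2.eq_swap
      · exact Or.inr (Or.inl ⟨m, rfl⟩)
      · exact Or.inl ⟨m, Sym2.eq_swap⟩
  refine ⟨γ₁, ?_, ?_, ?_⟩
  · intro e he
    rcases classify e he with ⟨k, rfl⟩ | ⟨k, rfl⟩ | hall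
    · rw [ev_t k]; exact hc k
    · rw [ev_p k]; exact (hp k).1
    · rw [ev_int e hall]; exact ha e he hall
  · intro e he
    have h1 : ¬∃ l, e = s(t l, u l) := by rintro ⟨l, rfl⟩; exact he (tE_mem l)
    have h2 : ¬∃ l, e = s(u l, u (l + 1)) := by rintro ⟨l, rfl⟩; exact he (pE_mem l)
    simp only [hγ₁def, dif_neg h1, dif_neg h2]
    split_ifs with h3
    · exact he0 e he h3
    · rfl
  · intro e he f hf hadj
    obtain ⟨hne, x, hxe, hxf⟩ := hadj
    rcases classify e he with ⟨k, rfl⟩ | ⟨k, rfl⟩ | halle <;>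
      rcases classify f hf with ⟨l, rfl⟩ | ⟨l, rfl⟩ | hallf
    -- (t, t)
    · exfalso
      have hkl : k ≠ l := fun h => hne (by rw [h])
      rcases Sym2.mem_iff.mp hxe with rfl | rfl
      · rcases Sym2.mem_iff.mp hxf with h' | h'
        · exact hkl (htinj h')
        · exact htu k l h'
      · rcases Sym2.mem_iff.mp hxf with h' | h'
        · exact htu l k h'.symm
        · exact hkl (huinj h')
    -- (t, p)
    · rw [ev_t k, ev_p l]
      have hx1 : x = u k := by
        rcases Sym2.mem_iff.mp hxe with rfl | rfl
        · exfalso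
          rcases Sym2.mem_iff.mp hxf with h' | h'
          · exact htu k l h'
          · exact htu k (l + 1) h'
        · rfl
      subst hx1
      rcases Sym2.mem_iff.mp hxf with h' | h'
      · rw [show k = l from huinj h']; exact (hp l).2.2.1
      · rw [show k = l + 1 from huinj h']
        have h5 := (hp (l + 1)).2.2.2
        rwa [add_sub_cancel_right] at h5
    -- (t, int)
    · rw [ev_t k, ev_int f hallf]
      have hx1 : x = t k := by
        rcases Sym2.mem_iff.mp hxe with rfl | rfl
        · rfl
        · exact absurd hxf (hallf k)
      subst hx1
      exact (hd f hf hallf k hxf).symm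
    -- (p, t)
    · rw [ev_p k, ev_t l]
      have hx1 : x = u l := by
        rcases Sym2.mem_iff.mp hxf with rfl | rfl
        · exfalso
          rcases Sym2.mem_iff.mp hxe with h' | h'
          · exact htu l k h'
          · exact htu l (k + 1) h'
        · rfl
      subst hx1
      rcases Sym2.mem_iff.mp hxe with h' | h'
      · rw [show l = k from huinj h']; exact ((hp k).2.2.1).symm
      · rw [show l = k + 1 from huinj h']
        have h5 := (hp (k + 1)).2.2.2
        rw [add_sub_cancel_right] at h5
        exact h5.symm
    -- (p, p)
    · rw [ev_p k, ev_p l]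
      have hkl : k ≠ l := fun h => hne (by rw [h])
      rcases Sym2.mem_iff.mp hxe with rfl | rfl
      · rcases Sym2.mem_iff.mp hxf with h' | h'
        · exact absurd (huinj h') hkl
        · rw [show k = l + 1 from huinj h']
          have h5 := (hp (l + 1)).2.1
          rw [add_sub_cancel_right] at h5
          exact h5.symm
      · rcases Sym2.mem_iff.mp hxf with h' | h'
        · rw [show l = k + 1 from (huinj h').symm]
          have h5 := (hp (k + 1)).2.1
          rwa [add_sub_cancel_right] at h5
        · exfalso
          have : k = l := by
            have := huinj h'
            exact add_right_cancel this
          exact hkl this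
    -- (p, int)
    · exfalso
      rcases Sym2.mem_iff.mp hxe with rfl | rfl
      · exact hallf k hxf
      · exact hallf (k + 1) hxf
    -- (int, t)
    · rw [ev_int e halle, ev_t l]
      have hx1 : x = t l := by
        rcases Sym2.mem_iff.mp hxf with rfl | rfl
        · rfl
        · exact absurd hxe (halle l)
      subst hx1
      exact hd e he halle l hxe
    -- (int, p)
    · exfalso
      rcases Sym2.mem_iff.mp hxf with rfl | rfl
      · exact halle l hxe
      · exact halle (l + 1) hxe
    -- (int, int)
    · rw [ev_int e halle, ev_int f hallf]
      exact hb e he f hf halle hallf ⟨hne, x, hxe, hxf⟩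

section PJ

variable {V₁ V₂ : Type*} {G1 : SimpleGraph V₁} {G2 : SimpleGraph V₂}
  {u t : ZMod 5 → V₁} {v w : ZMod 5 → V₂}

lemma pj_mem_inl :
    ∀ {e : Sym2 V₁}, Sym2.map Sum.inl e ∈ (pentagonJoin G1 G2 u t v w).edgeSet ↔
      e ∈ G1.edgeSet ∧ ∀ k, u k ∉ e := by
  intro e
  induction e using Sym2.ind with
  | _ a b =>
    rw [pentagonJoin, edgeSet_fromEdgeSet, Set.mem_diff]
    constructor
    · rintro ⟨hmem, _⟩
      rcases hmem with (h1 | h2) | h3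
      · obtain ⟨e', ⟨he', hu'⟩, heq⟩ := h1
        have : e' = s(a, b) := Sym2.map.injective Sum.inl_injective heq
        subst this
        exact ⟨he', hu'⟩
      · exfalso
        obtain ⟨e', _, heq⟩ := h2
        have : Sum.inl a ∈ Sym2.map Sum.inr e' := by
          rw [heq, Sym2.map_pair_eq]
          exact Sym2.mem_iff.mpr (Or.inl rfl)
        obtain ⟨z, _, hz⟩ := Sym2.mem_map.mp this
        exact nomatch hz
      · exfalso
        obtain ⟨k, hk⟩ := h3
        rw [Sym2.map_pair_eq] at hk
        rcases Sym2.eq_iff.mp hk with ⟨_, h2'⟩ | ⟨h1', _⟩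
        · exact nomatch h2'
        · exact nomatch h1'
    · rintro ⟨he, hu⟩
      refine ⟨Or.inl (Or.inl ⟨s(a, b), ⟨he, hu⟩, rfl⟩), ?_⟩
      rw [Sym2.map_pair_eq]
      simp only [Sym2.mem_diagSet, Set.mem_setOf_eq, Sym2.mk_isDiag_iff]
      intro hab
      exact (G1.ne_of_adj (G1.mem_edgeSet.mp he)) (Sum.inl_injective hab)

lemma pj_mem_inr :
    ∀ {e : Sym2 V₂}, Sym2.map Sum.inr e ∈ (pentagonJoin G1 G2 u t v w).edgeSet ↔
      e ∈ G2.edgeSet ∧ ∀ k, v k ∉ e := by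
  intro e
  induction e using Sym2.ind with
  | _ a b =>
    rw [pentagonJoin, edgeSet_fromEdgeSet, Set.mem_diff]
    constructor
    · rintro ⟨hmem, _⟩
      rcases hmem with (h1 | h2) | h3
      · exfalso
        obtain ⟨e', _, heq⟩ := h1
        have : Sum.inr a ∈ Sym2.map Sum.inl e' := by
          rw [heq, Sym2.map_pair_eq]
          exact Sym2.mem_iff.mpr (Or.inl rfl)
        obtain ⟨z, _, hz⟩ := Sym2.mem_map.mp this
        exact nomatch hz
      · obtain ⟨e', ⟨he', hu'⟩, heq⟩ := h2
        have : e' = s(a, b) := Sym2.map.injective Sum.inr_injective heq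
        subst this
        exact ⟨he', hu'⟩
      · exfalso
        obtain ⟨k, hk⟩ := h3
        rw [Sym2.map_pair_eq] at hk
        rcases Sym2.eq_iff.mp hk with ⟨h1', _⟩ | ⟨_, h2'⟩
        · exact nomatch h1'
        · exact nomatch h2'
    · rintro ⟨he, hu⟩
      refine ⟨Or.inl (Or.inr ⟨s(a, b), ⟨he, hu⟩, rfl⟩), ?_⟩
      rw [Sym2.map_pair_eq]
      simp only [Sym2.mem_diagSet, Set.mem_setOf_eq, Sym2.mk_isDiag_iff]
      intro hab
      exact (G2.ne_of_adj (G2.mem_edgeSet.mp he)) (Sum.inr_injective hab)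

lemma pj_adj_inl_inr {x : V₁} {z : V₂} :
    (pentagonJoin G1 G2 u t v w).Adj (Sum.inl x) (Sum.inr z) ↔
      ∃ k, x = t k ∧ z = w (2 * k) := by
  rw [pentagonJoin, fromEdgeSet_adj]
  constructor
  · rintro ⟨hmem, _⟩
    rcases hmem with (h1 | h2) | h3
    · exfalso
      obtain ⟨e', _, heq⟩ := h1
      have : Sum.inr z ∈ Sym2.map Sum.inl e' := by
        rw [heq]; exact Sym2.mem_iff.mpr (Or.inr rfl)
      obtain ⟨a, _, ha⟩ := Sym2.mem_map.mp this
      exact nomatch ha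
    · exfalso
      obtain ⟨e', _, heq⟩ := h2
      have : Sum.inl x ∈ Sym2.map Sum.inr e' := by
        rw [heq]; exact Sym2.mem_iff.mpr (Or.inl rfl)
      obtain ⟨a, _, ha⟩ := Sym2.mem_map.mp this
      exact nomatch ha
    · obtain ⟨k, hk⟩ := h3
      rcases Sym2.eq_iff.mp hk with ⟨h1', h2'⟩ | ⟨h1', _⟩
      · exact ⟨k, Sum.inl_injective h1', Sum.inr_injective h2'⟩
      · exact absurd h1' (by simp)
  · rintro ⟨k, rfl, rfl⟩
    exact ⟨Or.inr ⟨k, rfl⟩, by simp⟩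

lemma pj_adj_inl_inl {x y : V₁} :
    (pentagonJoin G1 G2 u t v w).Adj (Sum.inl x) (Sum.inl y) ↔
      G1.Adj x y ∧ ∀ k, u k ≠ x ∧ u k ≠ y := by
  constructor
  · intro h
    have hmem : Sym2.map Sum.inl s(x, y) ∈ (pentagonJoin G1 G2 u t v w).edgeSet := by
      rw [Sym2.map_pair_eq]
      exact (pentagonJoin G1 G2 u t v w).mem_edgeSet.mpr h
    rw [pj_mem_inl] at hmem
    obtain ⟨he, hu⟩ := hmem
    refine ⟨G1.mem_edgeSet.mp he, fun k => ?_⟩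
    have := hu k
    rw [Sym2.mem_iff] at this
    push_neg at this
    exact this
  · rintro ⟨h, hu⟩
    have hmem : Sym2.map Sum.inl s(x, y) ∈ (pentagonJoin G1 G2 u t v w).edgeSet := by
      rw [pj_mem_inl]
      refine ⟨G1.mem_edgeSet.mpr h, fun k => ?_⟩
      rw [Sym2.mem_iff]
      push_neg
      exact hu k
    rw [Sym2.map_pair_eq] at hmem
    exact (pentagonJoin G1 G2 u t v w).mem_edgeSet.mp hmem

lemma pj_mem_conn (k : ZMod 5) :
    s(Sum.inl (t k), Sum.inr (w (2 * k))) ∈ (pentagonJoin G1 G2 u t v w).edgeSet :=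
  (pentagonJoin G1 G2 u t v w).mem_edgeSet.mpr (pj_adj_inl_inr.mpr ⟨k, rfl, rfl⟩)

end PJ

-- ======== the combinatorial core, checked by `decide` ========

/-- The three colors, indexed by `Fin 3`. -/
def f3 : Fin 3 → Color := ![colA, colB, colC]

/-- `p` is a proper pentagon extension for boundary colors `c` (on index level). -/
def OK (c p : ZMod 5 → Fin 3) : Prop :=
  ∀ k, p (k - 1) ≠ p k ∧ c k ≠ p k ∧ c k ≠ p (k - 1)

instance (c : ZMod 5 → Fin 3) : DecidablePred (OK c) := fun p => by unfold OK; infer_instance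

set_option maxHeartbeats 4000000 in
set_option maxRecDepth 10000 in
theorem combi : ∀ c : ZMod 5 → Fin 3, (∑ k : ZMod 5, f3 (c k)) = 0 →
    (∃ p, OK c p) ∨ (∃ p, OK (fun j => c (3 * j)) p) := by decide

lemma handshake {V₁ V₂ : Type*} [Fintype V₁] [Fintype V₂]
    {G1 : SimpleGraph V₁} {G2 : SimpleGraph V₂} {u t : ZMod 5 → V₁} {v w : ZMod 5 → V₂}
    (hcub1 : IsCubic G1) (huinj : Function.Injective u) (htinj : Function.Injective t)
    (hP1 : ∀ k, G1.Adj (u k) (u (k + 1))) (ht : ∀ k, G1.Adj (t k) (u k))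
    (htu : ∀ k l, t k ≠ u l)
    {γ : Sym2 (V₁ ⊕ V₂) → Color} (hγ : γ ∈ EC (pentagonJoin G1 G2 u t v w)) :
    ∑ k : ZMod 5, γ s(Sum.inl (t k), Sum.inr (w (2 * k))) = 0 := by
  classical
  set G := pentagonJoin G1 G2 u t v w with hG
  obtain ⟨hγ1, hγ0, hγ2⟩ := hγ
  have key : ∀ (z : V₁ ⊕ V₂) (e1 e2 e3 : Sym2 (V₁ ⊕ V₂)),
      e1 ∈ G.edgeSet → e2 ∈ G.edgeSet → e3 ∈ G.edgeSet →
      e1 ≠ e2 → e1 ≠ e3 → e2 ≠ e3 → z ∈ e1 → z ∈ e2 → z ∈ e3 →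
      γ e1 + (γ e2 + γ e3) = 0 := by
    intro z e1 e2 e3 h1 h2 h3 n12 n13 n23 m1 m2 m3
    rw [← add_assoc]
    exact sum3 (hγ1 _ h1) (hγ1 _ h2) (hγ1 _ h3)
      (hγ2 _ h1 _ h2 ⟨n12, z, m1, m2⟩) (hγ2 _ h1 _ h3 ⟨n13, z, m1, m3⟩)
      (hγ2 _ h2 _ h3 ⟨n23, z, m2, m3⟩)
  set F : V₁ → (V₁ ⊕ V₂) → Color :=
    fun x y => if G.Adj (Sum.inl x) y then γ s(Sum.inl x, y) else 0 with hF
  -- every inner sum vanishes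
  have inner_zero : ∀ x : V₁, (∑ y : V₁ ⊕ V₂, F x y) = 0 := by
    intro x
    rw [Fintype.sum_sum_type]
    by_cases hxu : ∃ m, x = u m
    · obtain ⟨m, rfl⟩ := hxu
      have hA : (∑ y : V₁, F (u m) (Sum.inl y)) = 0 := by
        apply Finset.sum_eq_zero
        intro y _
        simp only [hF]
        apply if_neg
        intro hadj
        exact ((pj_adj_inl_inl.mp hadj).2 m).1 rfl
      have hB : (∑ z : V₂, F (u m) (Sum.inr z)) = 0 := by
        apply Finset.sum_eq_zero
        intro z _
        simp only [hF]
        apply if_neg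
        intro hadj
        obtain ⟨k, hk, _⟩ := pj_adj_inl_inr.mp hadj
        exact htu k m hk.symm
      rw [hA, hB, add_zero]
    · push_neg at hxu
      by_cases hxt : ∃ k, x = t k
      · obtain ⟨k, rfl⟩ := hxt
        -- the two neighbors of t k other than u k
        have hcard3 : (G1.neighborSet (t k)).ncard = 3 := hcub1 (t k)
        have hukmem : u k ∈ G1.neighborSet (t k) := ht k
        have hcard2 : ((G1.neighborSet (t k)) \ {u k}).ncard = 2 := by
          rw [Set.ncard_diff_singleton_of_mem hukmem, hcard3]
        obtain ⟨y1, y2, hy12, hs2⟩ := Set.ncard_eq_two.mp hcard2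
        have hprop : ∀ y ∈ (G1.neighborSet (t k)) \ {u k},
            G1.Adj (t k) y ∧ ∀ m, y ≠ u m := by
          intro y hy
          obtain ⟨hy1, hy2⟩ := hy
          refine ⟨hy1, fun m hm => ?_⟩
          subst hm
          have hkm : k = m := adj_t_u hcub1 huinj htinj hP1 ht htu hy1
          rw [hkm] at hy2
          exact hy2 rfl
        have hy1m : y1 ∈ (G1.neighborSet (t k)) \ {u k} := by rw [hs2]; simp
        have hy2m : y2 ∈ (G1.neighborSet (t k)) \ {u k} := by rw [hs2]; simp
        obtain ⟨hadj1, hnu1⟩ := hprop y1 hy1m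
        obtain ⟨hadj2, hnu2⟩ := hprop y2 hy2m
        have hcond : ∀ y : V₁, G.Adj (Sum.inl (t k)) (Sum.inl y) ↔ y = y1 ∨ y = y2 := by
          intro y
          rw [pj_adj_inl_inl]
          constructor
          · rintro ⟨hadj, hav⟩
            have hym : y ∈ (G1.neighborSet (t k)) \ {u k} := by
              refine ⟨hadj, ?_⟩
              simp only [Set.mem_singleton_iff]
              exact fun hh => ((hav k).2 hh.symm)
            rw [hs2] at hym
            simpa using hym
          · intro hy
            rcases hy with rfl | rfl
            · exact ⟨hadj1, fun m => ⟨(htu k m).symm, fun hh => hnu1 m hh.symm⟩⟩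
            · exact ⟨hadj2, fun m => ⟨(htu k m).symm, fun hh => hnu2 m hh.symm⟩⟩
        have hA : (∑ y : V₁, F (t k) (Sum.inl y)) =
            γ s(Sum.inl (t k), Sum.inl y1) + γ s(Sum.inl (t k), Sum.inl y2) := by
          simp only [hF]
          exact sum_ite_two' _ _ hy12 hcond
        have hcondB : ∀ z : V₂, G.Adj (Sum.inl (t k)) (Sum.inr z) ↔ z = w (2 * k) := by
          intro z
          rw [pj_adj_inl_inr]
          constructor
          · rintro ⟨k', hk', rfl⟩
            rw [htinj hk']
          · rintro rfl
            exact ⟨k, rfl, rfl⟩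
        have hB : (∑ z : V₂, F (t k) (Sum.inr z)) = γ s(Sum.inl (t k), Sum.inr (w (2 * k))) := by
          simp only [hF]
          exact sum_ite_one' _ _ hcondB
        rw [hA, hB, add_assoc]
        refine key (Sum.inl (t k)) _ _ _ ?_ ?_ ?_ ?_ ?_ ?_ ?_ ?_ ?_
        · exact G.mem_edgeSet.mpr ((hcond y1).mpr (Or.inl rfl))
        · exact G.mem_edgeSet.mpr ((hcond y2).mpr (Or.inr rfl))
        · exact pj_mem_conn k
        · exact sym2_ne_left (fun hh => hy12 (Sum.inl_injective hh))
            (fun hh => hadj2.ne' (Sum.inl_injective hh))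
        · exact sym2_ne_left (by simp) (by simp)
        · exact sym2_ne_left (by simp) (by simp)
        · exact Sym2.mem_iff.mpr (Or.inl rfl)
        · exact Sym2.mem_iff.mpr (Or.inl rfl)
        · exact Sym2.mem_iff.mpr (Or.inl rfl)
      · push_neg at hxt
        have hcard3 : (G1.neighborSet x).ncard = 3 := hcub1 x
        obtain ⟨y1, y2, y3, h12, h13, h23, hN⟩ := Set.ncard_eq_three.mp hcard3
        have hadj : ∀ y, y ∈ G1.neighborSet x ↔ y = y1 ∨ y = y2 ∨ y = y3 := by
          intro y; rw [hN]; simp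
        have hnu : ∀ y, G1.Adj x y → ∀ m, y ≠ u m := by
          intro y hy m hm
          subst hm
          rcases adjU hcub1 huinj hP1 ht htu hy.symm with h' | h' | h'
          · exact hxu (m - 1) h'
          · exact hxu (m + 1) h'
          · exact hxt m h'
        have hcond : ∀ y : V₁, G.Adj (Sum.inl x) (Sum.inl y) ↔ y = y1 ∨ y = y2 ∨ y = y3 := by
          intro y
          rw [pj_adj_inl_inl]
          constructor
          · rintro ⟨hadj', _⟩
            exact (hadj y).mp hadj'
          · intro hy
            have hyadj : G1.Adj x y := (hadj y).mpr hy
            exact ⟨hyadj, fun m => ⟨fun hh => hxu m hh.symm, fun hh => hnu y hyadj m hh.symm⟩⟩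
        have hA : (∑ y : V₁, F x (Sum.inl y)) =
            γ s(Sum.inl x, Sum.inl y1) +
              (γ s(Sum.inl x, Sum.inl y2) + γ s(Sum.inl x, Sum.inl y3)) := by
          simp only [hF]
          exact sum_ite_three' _ _ h12 h13 h23 hcond
        have hB : (∑ z : V₂, F x (Sum.inr z)) = 0 := by
          apply Finset.sum_eq_zero
          intro z _
          simp only [hF]
          apply if_neg
          intro hadj'
          obtain ⟨k, hk, _⟩ := pj_adj_inl_inr.mp hadj'
          exact hxt k hk
        rw [hA, hB, add_zero]
        have hmem : ∀ y, (y = y1 ∨ y = y2 ∨ y = y3) →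
            s(Sum.inl x, Sum.inl y) ∈ G.edgeSet :=
          fun y hy => G.mem_edgeSet.mpr ((hcond y).mpr hy)
        have hne' : ∀ y, (y = y1 ∨ y = y2 ∨ y = y3) → y ≠ x := by
          intro y hy
          exact ((hadj y).mpr hy).ne'
        refine key (Sum.inl x) _ _ _ (hmem y1 (Or.inl rfl)) (hmem y2 (Or.inr (Or.inl rfl)))
          (hmem y3 (Or.inr (Or.inr rfl))) ?_ ?_ ?_ ?_ ?_ ?_
        · exact sym2_ne_left (fun hh => h12 (Sum.inl_injective hh))
            (fun hh => (hne' y2 (Or.inr (Or.inl rfl))) (Sum.inl_injective hh))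
        · exact sym2_ne_left (fun hh => h13 (Sum.inl_injective hh))
            (fun hh => (hne' y3 (Or.inr (Or.inr rfl))) (Sum.inl_injective hh))
        · exact sym2_ne_left (fun hh => h23 (Sum.inl_injective hh))
            (fun hh => (hne' y3 (Or.inr (Or.inr rfl))) (Sum.inl_injective hh))
        · exact Sym2.mem_iff.mpr (Or.inl rfl)
        · exact Sym2.mem_iff.mpr (Or.inl rfl)
        · exact Sym2.mem_iff.mpr (Or.inl rfl)
  -- total sum
  have hT : (∑ x : V₁, ∑ y : V₁ ⊕ V₂, F x y) = 0 :=
    Finset.sum_eq_zero fun x _ => inner_zero x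
  have hsplit : (∑ x : V₁, ∑ y : V₁ ⊕ V₂, F x y) =
      (∑ x : V₁, ∑ y : V₁, F x (Sum.inl y)) + ∑ x : V₁, ∑ z : V₂, F x (Sum.inr z) := by
    rw [← Finset.sum_add_distrib]
    exact Finset.sum_congr rfl fun x _ => Fintype.sum_sum_type _
  have hAzero : (∑ x : V₁, ∑ y : V₁, F x (Sum.inl y)) = 0 := by
    have hprod : (∑ x : V₁, ∑ y : V₁, F x (Sum.inl y)) =
        ∑ p : V₁ × V₁, F p.1 (Sum.inl p.2) :=
      (Fintype.sum_prod_type (fun p : V₁ × V₁ => F p.1 (Sum.inl p.2))).symm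
    rw [hprod]
    apply Finset.sum_ninvolution Prod.swap
    · intro p
      have hsymm : F p.1 (Sum.inl p.2) = F p.2 (Sum.inl p.1) := by
        simp only [hF]
        refine if_congr ?_ ?_ rfl
        · constructor
          · exact fun h => h.symm
          · exact fun h => h.symm
        · congr 1
          exact Sym2.eq_swap
      rw [show (Prod.swap p).1 = p.2 from rfl, show (Prod.swap p).2 = p.1 from rfl, ← hsymm]
      exact color_add_self _
    · intro p hp hswap
      apply hp
      have hpp : p.1 = p.2 := (congrArg Prod.fst hswap).symm
      simp only [hF]
      apply if_neg
      rw [hpp]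
      exact fun h => G.irrefl h
    · exact fun _ => Finset.mem_univ _
    · exact fun p => Prod.swap_swap p
  have hBconn : (∑ x : V₁, ∑ z : V₂, F x (Sum.inr z)) =
      ∑ k : ZMod 5, γ s(Sum.inl (t k), Sum.inr (w (2 * k))) := by
    have hstep : ∀ (x : V₁) (z : V₂), F x (Sum.inr z) =
        if (x, z) ∈ (Finset.univ : Finset (ZMod 5)).image (fun k => (t k, w (2 * k)))
          then γ s(Sum.inl x, Sum.inr z) else 0 := by
      intro x z
      simp only [hF]
      refine if_congr ?_ rfl rfl
      rw [pj_adj_inl_inr, Finset.mem_image]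
      constructor
      · rintro ⟨k, rfl, rfl⟩
        exact ⟨k, Finset.mem_univ k, rfl⟩
      · rintro ⟨k, _, hk⟩
        obtain ⟨h1, h2⟩ := Prod.mk.injEq _ _ _ _ ▸ hk
        exact ⟨k, h1.symm, h2.symm⟩
    calc (∑ x : V₁, ∑ z : V₂, F x (Sum.inr z))
        = ∑ p : V₁ × V₂,
            (if p ∈ (Finset.univ : Finset (ZMod 5)).image (fun k => (t k, w (2 * k)))
              then γ s(Sum.inl p.1, Sum.inr p.2) else 0) := by
          rw [Fintype.sum_prod_type]
          exact Finset.sum_congr rfl fun x _ =>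
            Finset.sum_congr rfl fun z _ => hstep x z
      _ = ∑ p ∈ (Finset.univ : Finset (ZMod 5)).image (fun k => (t k, w (2 * k))),
            γ s(Sum.inl p.1, Sum.inr p.2) := by
          rw [Finset.sum_ite_mem, Finset.univ_inter]
      _ = ∑ k : ZMod 5, γ s(Sum.inl (t k), Sum.inr (w (2 * k))) := by
          refine Finset.sum_image ?_
          intro k _ k' _ h
          exact htinj (Prod.ext_iff.mp h).1
  rw [hsplit, hAzero, zero_add, hBconn] at hT
  exact hT

/-- **Context 4.7 / Isaacs.** If `G'` and `G*` are snarks with pentagons `P' = (u k)` and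
`P* = (v k)`, with third edges `(t k, u k)` and `(v k, w k)`, then the graph `G` formed from
`G0'`, `G0*` and the five edges `(t k, w (2k))` admits no edge-3-coloring. -/
theorem statement_12 {V₁ V₂ : Type*} [Fintype V₁] [Fintype V₂]
    (G1 : SimpleGraph V₁) (G2 : SimpleGraph V₂) (hG1 : IsSnark G1) (hG2 : IsSnark G2)
    (u t : ZMod 5 → V₁) (v w : ZMod 5 → V₂)
    (huinj : Function.Injective u) (hP1 : ∀ k, G1.Adj (u k) (u (k + 1)))
    (ht : ∀ k, G1.Adj (t k) (u k)) (htu : ∀ k l, t k ≠ u l)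
    (hvinj : Function.Injective v) (hP2 : ∀ k, G2.Adj (v k) (v (k + 1)))
    (hw : ∀ k, G2.Adj (v k) (w k)) (hwv : ∀ k l, w k ≠ v l) :
    EC (pentagonJoin G1 G2 u t v w) = ∅ := by
  classical
  obtain ⟨-, hcub1, hg1, -, hEC1⟩ := hG1
  obtain ⟨-, hcub2, hg2, -, hEC2⟩ := hG2
  have ht' : ∀ k, G2.Adj (w k) (v k) := fun k => (hw k).symm
  have htinj : Function.Injective t := tinj hg1 huinj hP1 ht htu
  have hwinj : Function.Injective w := tinj hg2 hvinj hP2 ht' hwv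
  rw [Set.eq_empty_iff_forall_notMem]
  intro γ hγ
  obtain ⟨hγmem, hγ0, hγadj⟩ := hγ
  have hconn : ∀ k : ZMod 5,
      s(Sum.inl (t k), Sum.inr (w (2 * k))) ∈ (pentagonJoin G1 G2 u t v w).edgeSet :=
    fun k => pj_mem_conn k
  set c' : ZMod 5 → Color := fun k => γ s(Sum.inl (t k), Sum.inr (w (2 * k))) with hc'
  have hcmem : ∀ k, c' k ∈ colorSet := fun k => hγmem _ (hconn k)
  have hsum : (∑ k : ZMod 5, c' k) = 0 :=
    handshake hcub1 huinj htinj hP1 ht htu ⟨hγmem, hγ0, hγadj⟩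
  have hch : ∀ k, ∃ i : Fin 3, f3 i = c' k := by
    intro k
    rcases mem_colorSet_iff.mp (hcmem k) with h | h | h
    · exact ⟨0, by rw [h]; rfl⟩
    · exact ⟨1, by rw [h]; rfl⟩
    · exact ⟨2, by rw [h]; rfl⟩
  choose c₀ hc₀ using hch
  have hf3inj : Function.Injective f3 := by decide
  have hf3mem : ∀ i, f3 i ∈ colorSet := by
    intro i
    rw [mem_colorSet_iff]
    revert i
    decide
  have hsum0 : (∑ k : ZMod 5, f3 (c₀ k)) = 0 := by
    rw [Finset.sum_congr rfl fun k _ => hc₀ k]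
    exact hsum
  rcases combi c₀ hsum0 with ⟨p₀, hp₀⟩ | ⟨p₀, hp₀⟩
  · have hext : Extendable c' := by
      refine ⟨fun k => f3 (p₀ k), fun k => ⟨hf3mem _, ?_, ?_, ?_⟩⟩
      · exact fun h => (hp₀ k).1 (hf3inj h)
      · rw [← hc₀ k]; exact fun h => (hp₀ k).2.1 (hf3inj h)
      · rw [← hc₀ k]; exact fun h => (hp₀ k).2.2 (hf3inj h)
    obtain ⟨γ₁, hγ₁⟩ := buildEC hcub1 huinj htinj hP1 ht htu
      (fun e => γ (Sym2.map Sum.inl e)) c'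
      (fun e he hav => hγmem _ (pj_mem_inl.mpr ⟨he, hav⟩))
      (fun e he hav => hγ0 _ (fun hmem => he (pj_mem_inl.mp hmem).1))
      (by rintro e he f hf have_ havf ⟨hnef, x, hxe, hxf⟩
          exact hγadj _ (pj_mem_inl.mpr ⟨he, have_⟩) _ (pj_mem_inl.mpr ⟨hf, havf⟩)
            ⟨fun hh => hnef (Sym2.map.injective Sum.inl_injective hh),
             Sum.inl x, Sym2.mem_map.mpr ⟨x, hxe, rfl⟩, Sym2.mem_map.mpr ⟨x, hxf, rfl⟩⟩)
      hcmem
      (by intro e he hav k hte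
          have hne : Sym2.map Sum.inl e ≠ s(Sum.inl (t k), Sum.inr (w (2 * k))) := by
            intro hh
            have hmm : Sum.inr (w (2 * k)) ∈ Sym2.map Sum.inl e := by
              rw [hh]; exact Sym2.mem_iff.mpr (Or.inr rfl)
            obtain ⟨a, _, ha⟩ := Sym2.mem_map.mp hmm
            exact nomatch ha
          exact hγadj _ (pj_mem_inl.mpr ⟨he, hav⟩) _ (hconn k)
            ⟨hne, Sum.inl (t k), Sym2.mem_map.mpr ⟨t k, hte, rfl⟩,
              Sym2.mem_iff.mpr (Or.inl rfl)⟩)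
      hext
    rw [hEC1] at hγ₁
    exact absurd hγ₁ (Set.notMem_empty _)
  · have h6 : ∀ j : ZMod 5, 2 * (3 * j) = j := by decide
    have hconn2 : ∀ j : ZMod 5,
        s(Sum.inl (t (3 * j)), Sum.inr (w j)) ∈ (pentagonJoin G1 G2 u t v w).edgeSet := by
      intro j
      have hh := hconn (3 * j)
      rwa [h6 j] at hh
    have hc2val : ∀ j : ZMod 5, c' (3 * j) = γ s(Sum.inl (t (3 * j)), Sum.inr (w j)) := by
      intro j
      rw [hc']
      simp only
      rw [h6 j]
    have hext : Extendable (fun j => c' (3 * j)) := by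
      refine ⟨fun k => f3 (p₀ k), fun k => ⟨hf3mem _, ?_, ?_, ?_⟩⟩
      · exact fun h => (hp₀ k).1 (hf3inj h)
      · show c' (3 * k) ≠ f3 (p₀ k)
        rw [← hc₀ (3 * k)]
        exact fun h => (hp₀ k).2.1 (hf3inj h)
      · show c' (3 * k) ≠ f3 (p₀ (k - 1))
        rw [← hc₀ (3 * k)]
        exact fun h => (hp₀ k).2.2 (hf3inj h)
    obtain ⟨γ₂, hγ₂⟩ := buildEC hcub2 hvinj hwinj hP2 ht' hwv
      (fun e => γ (Sym2.map Sum.inr e)) (fun j => c' (3 * j))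
      (fun e he hav => hγmem _ (pj_mem_inr.mpr ⟨he, hav⟩))
      (fun e he hav => hγ0 _ (fun hmem => he (pj_mem_inr.mp hmem).1))
      (by rintro e he f hf have_ havf ⟨hnef, x, hxe, hxf⟩
          exact hγadj _ (pj_mem_inr.mpr ⟨he, have_⟩) _ (pj_mem_inr.mpr ⟨hf, havf⟩)
            ⟨fun hh => hnef (Sym2.map.injective Sum.inr_injective hh),
             Sum.inr x, Sym2.mem_map.mpr ⟨x, hxe, rfl⟩, Sym2.mem_map.mpr ⟨x, hxf, rfl⟩⟩)
      (fun j => hcmem (3 * j))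
      (by intro e he hav j hte
          have hne : Sym2.map Sum.inr e ≠ s(Sum.inl (t (3 * j)), Sum.inr (w j)) := by
            intro hh
            have hmm : Sum.inl (t (3 * j)) ∈ Sym2.map Sum.inr e := by
              rw [hh]; exact Sym2.mem_iff.mpr (Or.inl rfl)
            obtain ⟨a, _, ha⟩ := Sym2.mem_map.mp hmm
            exact nomatch ha
          show γ (Sym2.map Sum.inr e) ≠ c' (3 * j)
          rw [hc2val j]
          exact hγadj _ (pj_mem_inr.mpr ⟨he, hav⟩) _ (hconn2 j)
            ⟨hne, Sum.inr (w j), Sym2.mem_map.mpr ⟨w j, hte, rfl⟩,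
              Sym2.mem_iff.mpr (Or.inr rfl)⟩)
      hext
    rw [hEC2] at hγ₂
    exact absurd hγ₂ (Set.notMem_empty _)

end SnarkPaper
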